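/- arXiv:1310.7288 — 2 statements merged into one kernel-verified Lean document; each statement's English description precedes it below -/
import Mathlib

section
/- Define p_m(n) as the expected number of distinct subsequences of length n−m of a uniformly random binary string of length n. For each fixed m ≥ 0, there is a polynomial q_m of degree m with leading coefficient 1/(2^m · m!) such that p_m(n) = q_m(n) for all n ≥ m; consequently Ĉ(n, n−m) = 2^{-m}·C(n,m) + O(n^{m-1}). -/
open Polynomial

/-- Number of distinct subsequences of `s` of length `m`. -/
def countM (s : List Bool) (m : ℕ) : ℕ :=
  ((s.sublists.filter (fun t => t.length == m)).dedup).length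

/-- Expected number of distinct `k`-subsequences of a uniformly random
binary string of length `n`. -/
noncomputable def Chat (n k : ℕ) : ℚ :=
  (∑ f : Fin n → Bool, (countM (List.ofFn f) k : ℚ)) / 2 ^ n

def SL (s : List Bool) (m : ℕ) : Finset (List Bool) :=
  (s.sublists.filter (fun t => t.length == m)).toFinset

lemma mem_SL {s u : List Bool} {m : ℕ} : u ∈ SL s m ↔ u.Sublist s ∧ u.length = m := by
  simp [SL, List.mem_filter]

lemma countM_eq (s : List Bool) (m : ℕ) : countM s m = (SL s m).card := by
  rw [SL, List.card_toFinset, countM]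

lemma SL_cons (a : Bool) (t : List Bool) (k : ℕ) :
    SL (a :: t) (k + 1) = SL t (k + 1) ∪ (SL t k).image (a :: ·) := by
  ext u
  simp only [mem_SL, Finset.mem_union, Finset.mem_image, List.sublist_cons_iff]
  constructor
  · rintro ⟨h | ⟨r, rfl, hr⟩, hl⟩
    · exact Or.inl ⟨h, hl⟩
    · exact Or.inr ⟨r, ⟨hr, by simpa using hl⟩, rfl⟩
  · rintro (⟨h, hl⟩ | ⟨r, ⟨hr, hl⟩, rfl⟩)
    · exact ⟨Or.inl h, hl⟩
    · exact ⟨Or.inr ⟨r, rfl, hr⟩, by simp [hl]⟩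

lemma SL_inter (a : Bool) (t : List Bool) (k : ℕ) :
    SL t (k + 1) ∩ (SL t k).image (a :: ·)
      = (SL t (k + 1)).filter (fun u => u.head? = some a) := by
  ext u
  simp only [Finset.mem_inter, Finset.mem_image, Finset.mem_filter, mem_SL]
  constructor
  · rintro ⟨h1, r, _hr, rfl⟩
    exact ⟨h1, rfl⟩
  · rintro ⟨⟨hs, hl⟩, hh⟩
    refine ⟨⟨hs, hl⟩, ?_⟩
    match u, hh, hs, hl with
    | b :: r, hh, hs, hl =>
      simp only [List.head?_cons, Option.some.injEq] at hh
      subst hh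
      exact ⟨r, ⟨List.sublist_of_cons_sublist hs, by simpa using hl⟩, rfl⟩

lemma SL_filter_heads (t : List Bool) (k : ℕ) :
    ((SL t (k + 1)).filter (fun u => u.head? = some true)).card
      + ((SL t (k + 1)).filter (fun u => u.head? = some false)).card
      = (SL t (k + 1)).card := by
  have h := Finset.card_filter_add_card_filter_not
      (s := SL t (k + 1)) (p := fun u => u.head? = some true)
  have h2 : (SL t (k + 1)).filter (fun u => ¬ u.head? = some true)
      = (SL t (k + 1)).filter (fun u => u.head? = some false) := by
    apply Finset.filter_congr
    intro u hu
    rw [mem_SL] at hu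
    obtain ⟨-, hl⟩ := hu
    match u, hl with
    | b :: r, _ => cases b <;> simp
  rw [h2] at h
  exact h

lemma key (t : List Bool) (k : ℕ) :
    countM (true :: t) (k + 1) + countM (false :: t) (k + 1) + countM t (k + 1)
      = 2 * countM t (k + 1) + 2 * countM t k := by
  have hinj : ∀ a : Bool, ((SL t k).image (a :: ·)).card = (SL t k).card := by
    intro a
    apply Finset.card_image_of_injective
    intro x y h; simpa using h
  have h1 : ∀ a : Bool, countM (a :: t) (k + 1)
      + ((SL t (k + 1)).filter (fun u => u.head? = some a)).card
      = countM t (k + 1) + countM t k := by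
    intro a
    rw [countM_eq, countM_eq, countM_eq, SL_cons, ← SL_inter a t k,
      Finset.card_union_add_card_inter, hinj a]
  have h2 := h1 true
  have h3 := h1 false
  have h4 := SL_filter_heads t k
  have h5 := countM_eq t (k + 1)
  omega

lemma ofFn_cons (n : ℕ) (a : Bool) (g : Fin n → Bool) :
    List.ofFn (Fin.cons a g) = a :: List.ofFn g := by
  rw [List.ofFn_succ]; simp

lemma countM_zero (s : List Bool) : countM s 0 = 1 := by
  rw [countM_eq]
  have : SL s 0 = {[]} := by
    ext u
    simp only [mem_SL, List.length_eq_zero_iff, Finset.mem_singleton]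
    exact ⟨fun h => h.2, fun h => ⟨h ▸ List.nil_sublist s, h ▸ rfl⟩⟩
  rw [this, Finset.card_singleton]

lemma countM_full (s : List Bool) : countM s s.length = 1 := by
  rw [countM_eq]
  have : SL s s.length = {s} := by
    ext u
    simp only [mem_SL, Finset.mem_singleton]
    constructor
    · rintro ⟨hs, hl⟩; exact hs.eq_of_length hl
    · rintro rfl; exact ⟨List.Sublist.refl _, rfl⟩
  rw [this, Finset.card_singleton]

lemma Chat_zero (n : ℕ) : Chat n 0 = 1 := by
  rw [Chat]
  simp [countM_zero]

lemma Chat_diag (n : ℕ) : Chat n n = 1 := by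
  rw [Chat]
  have : ∀ f : Fin n → Bool, countM (List.ofFn f) n = 1 := by
    intro f
    have := countM_full (List.ofFn f)
    rwa [List.length_ofFn] at this
  simp [this]

def consEquivB (n : ℕ) : Bool × (Fin n → Bool) ≃ (Fin (n + 1) → Bool) where
  toFun p := Fin.cons p.1 p.2
  invFun f := (f 0, fun i => f i.succ)
  left_inv := by rintro ⟨a, g⟩; simp [Fin.tail]
  right_inv := fun f => Fin.cons_self_tail f

lemma Chat_rec (n k : ℕ) :
    Chat (n + 1) (k + 1) = Chat n k + Chat n (k + 1) / 2 := by
  have hsum : (∑ f : Fin (n + 1) → Bool, (countM (List.ofFn f) (k + 1) : ℚ))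
      = (∑ g : Fin n → Bool, (countM (List.ofFn g) (k + 1) : ℚ))
        + 2 * ∑ g : Fin n → Bool, (countM (List.ofFn g) k : ℚ) := by
    have he := Fintype.sum_equiv (consEquivB n)
        (fun p : Bool × (Fin n → Bool) => (countM (p.1 :: List.ofFn p.2) (k + 1) : ℚ))
        (fun f : Fin (n + 1) → Bool => (countM (List.ofFn f) (k + 1) : ℚ))
        (fun p => by rw [show consEquivB n p = Fin.cons p.1 p.2 from rfl, ofFn_cons])
    rw [← he, Fintype.sum_prod_type, Fintype.sum_bool]
    rw [Finset.mul_sum, ← Finset.sum_add_distrib, ← Finset.sum_add_distrib]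
    apply Finset.sum_congr rfl
    intro g _
    have hk := key (List.ofFn g) k
    have hq : (countM (true :: List.ofFn g) (k+1) : ℚ) + countM (false :: List.ofFn g) (k+1)
        = countM (List.ofFn g) (k+1) + 2 * countM (List.ofFn g) k := by
      have h := congrArg (fun x : ℕ => (x : ℚ)) hk
      push_cast at h
      linarith
    linarith
  rw [Chat, Chat, Chat, hsum]
  have h2 : (2:ℚ) ^ n ≠ 0 := by positivity
  field_simp
  ring

lemma desc_shift (k : ℕ) :
    (descPochhammer ℚ (k + 1)).comp (X + 1) - descPochhammer ℚ (k + 1)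
      = ((k : ℚ) + 1) • descPochhammer ℚ k := by
  have h1 : (descPochhammer ℚ (k + 1)).comp (X + 1) = (X + 1) * descPochhammer ℚ k := by
    rw [descPochhammer_succ_left, mul_comp, X_comp, comp_assoc]
    simp
  rw [h1, descPochhammer_succ_right, smul_eq_C_mul, map_add, C_1, Polynomial.C_eq_natCast]
  ring
set_option maxHeartbeats 1000000 in
lemma antidiff (d : ℕ) :
    ∀ r : Polynomial ℚ, r.degree ≤ d →
    ∃ Q : Polynomial ℚ, Q.comp (X + 1) - Q = r ∧ Q.degree ≤ d + 1
      ∧ Q.coeff (d + 1) = r.coeff d / (d + 1) := by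
  induction d with
  | zero =>
    intro r hr
    refine ⟨r.coeff 0 • X, ?_, ?_, ?_⟩
    · rw [smul_comp, X_comp, smul_add, add_sub_cancel_left]
      conv_rhs => rw [eq_C_of_degree_le_zero hr]
      simp [smul_eq_C_mul]
    · exact (degree_smul_le _ _).trans (by simp [degree_X])
    · simp
  | succ d ih =>
    intro r hr
    set c := r.coeff (d + 1) with hc
    set Q₁ : Polynomial ℚ := (c / ((d : ℚ) + 2)) • descPochhammer ℚ (d + 2) with hQ₁def
    have hQ₁ : Q₁.comp (X + 1) - Q₁ = c • descPochhammer ℚ (d + 1) := by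
      rw [hQ₁def, smul_comp, ← smul_sub]
      have hds := desc_shift (d + 1)
      push_cast at hds
      have hd2 : ((d:ℚ) + 2) ≠ 0 := by positivity
      have hmul : c / ((d:ℚ) + 2) * ((d:ℚ) + 1 + 1) = c := by field_simp; ring
      rw [hds, smul_smul, hmul]
    set r' : Polynomial ℚ := r - c • descPochhammer ℚ (d + 1) with hr'def
    have hmon := monic_descPochhammer ℚ (d + 1)
    have hndeg : (descPochhammer ℚ (d + 1)).natDegree = d + 1 := descPochhammer_natDegree ℚ (d + 1)
    have hr' : r'.degree ≤ d := by
      rw [degree_le_iff_coeff_zero]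
      intro m hm
      have hm' : d < m := by exact_mod_cast hm
      rcases eq_or_lt_of_le (Nat.succ_le_of_lt hm') with h | h
      · have hcoeff : (descPochhammer ℚ (d + 1)).coeff (d + 1) = 1 := by
          have hh := hmon.coeff_natDegree
          rwa [hndeg] at hh
        rw [hr'def, coeff_sub, coeff_smul, ← h, hcoeff]
        simp [hc]
      · have h1 : r.coeff m = 0 := by
          apply coeff_eq_zero_of_degree_lt
          apply hr.trans_lt
          exact_mod_cast h
        have h2 : (descPochhammer ℚ (d + 1)).coeff m = 0 :=
          coeff_eq_zero_of_natDegree_lt (by rw [hndeg]; exact h)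
        rw [hr'def, coeff_sub, coeff_smul, h1, h2]
        simp
    obtain ⟨Q₂, hQ₂, hQ₂deg, -⟩ := ih r' hr'
    refine ⟨Q₁ + Q₂, ?_, ?_, ?_⟩
    · rw [add_comp]
      have hre : Q₁.comp (X + 1) + Q₂.comp (X + 1) - (Q₁ + Q₂)
          = (Q₁.comp (X + 1) - Q₁) + (Q₂.comp (X + 1) - Q₂) := by ring
      rw [hre, hQ₁, hQ₂, hr'def]
      ring
    · apply (degree_add_le _ _).trans
      apply max_le
      · apply (degree_smul_le _ _).trans
        apply degree_le_natDegree.trans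
        exact_mod_cast le_of_eq (descPochhammer_natDegree ℚ (d + 2))
      · refine hQ₂deg.trans ?_
        have : ((d : WithBot ℕ) : WithBot ℕ) + 1 ≤ ((d+1 : ℕ) : WithBot ℕ) + 1 := by
          refine add_le_add ?_ le_rfl
          exact_mod_cast Nat.le_succ d
        exact this
    · rw [coeff_add, coeff_smul]
      have h2 : Q₂.coeff (d + 1 + 1) = 0 := by
        apply coeff_eq_zero_of_degree_lt
        apply hQ₂deg.trans_lt
        exact_mod_cast Nat.lt_succ_self (d + 1)
      have h3 : (descPochhammer ℚ (d + 2)).coeff (d + 1 + 1) = 1 := by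
        have hh := (monic_descPochhammer ℚ (d + 2)).coeff_natDegree
        rwa [descPochhammer_natDegree] at hh
      rw [h2, h3]
      push_cast
      simp only [smul_eq_mul, mul_one, add_zero]
      ring

set_option maxHeartbeats 1000000 in
lemma poly_exists (m : ℕ) : ∃ q : Polynomial ℚ, q.degree = m ∧
    q.leadingCoeff = 1 / (2 ^ m * m.factorial) ∧
    ∀ n : ℕ, m ≤ n → Chat n (n - m) = q.eval (n : ℚ) := by
  induction m with
  | zero =>
    refine ⟨1, by simp [degree_one], by simp [Nat.factorial], ?_⟩
    intro n _
    simp only [Nat.sub_zero, eval_one]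
    exact Chat_diag n
  | succ m ih =>
    obtain ⟨q, hqdeg, hqlead, hqeval⟩ := ih
    have hqnat : q.natDegree = m := natDegree_eq_of_degree_eq_some hqdeg
    obtain ⟨Q, hQcomp, hQdeg, hQcoeff⟩ := antidiff m ((1/2 : ℚ) • q)
      ((degree_smul_le _ _).trans hqdeg.le)
    have hval : (1 : ℚ) / (2 ^ (m+1) * (m+1).factorial) ≠ 0 := by positivity
    have hQtop : Q.coeff (m + 1) = 1 / (2 ^ (m+1) * (m+1).factorial) := by
      rw [hQcoeff, coeff_smul]
      have : q.coeff m = q.leadingCoeff := by rw [leadingCoeff, hqnat]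
      rw [this, hqlead]
      rw [Nat.factorial_succ]
      push_cast
      have h1 : (2:ℚ)^m ≠ 0 := by positivity
      have h2 : ((m.factorial : ℚ)) ≠ 0 := by positivity
      have h3 : ((m:ℚ) + 1) ≠ 0 := by positivity
      field_simp
      ring_nf
      rw [mul_inv_cancel₀ h2, one_mul, inv_pow, inv_mul_cancel₀ h1]
    set q' : Polynomial ℚ := Q + C (1 - Q.eval ((m : ℚ) + 1)) with hq'def
    have hq'coeff : q'.coeff (m + 1) = 1 / (2 ^ (m+1) * (m+1).factorial) := by
      rw [hq'def, coeff_add, coeff_C]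
      simp [hQtop]
    have hq'degle : q'.degree ≤ (m + 1 : ℕ) := by
      rw [hq'def]
      apply (degree_add_le _ _).trans
      apply max_le
      · exact_mod_cast hQdeg
      · exact degree_C_le.trans (by exact_mod_cast Nat.zero_le (m + 1))
    have hq'deg : q'.degree = (m + 1 : ℕ) := by
      apply le_antisymm hq'degle
      apply le_degree_of_ne_zero
      rw [hq'coeff]; exact hval
    have hq'nat : q'.natDegree = m + 1 := natDegree_eq_of_degree_eq_some hq'deg
    have hq'lead : q'.leadingCoeff = 1 / (2 ^ (m+1) * (m+1).factorial) := by
      rw [leadingCoeff, hq'nat, hq'coeff]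
    have hstep : ∀ x : ℚ, q'.eval (x + 1) = q'.eval x + (1/2) * q.eval x := by
      intro x
      have := congrArg (fun p : Polynomial ℚ => p.eval x) hQcomp
      simp only [eval_sub, eval_comp, eval_add, eval_X, eval_one, eval_smul, smul_eq_mul] at this
      rw [hq'def]
      simp only [eval_add, eval_C]
      linarith
    refine ⟨q', hq'deg, hq'lead, ?_⟩
    intro n hn
    induction n, hn using Nat.le_induction with
    | base =>
      rw [Nat.sub_self, Chat_zero]
      rw [hq'def]
      simp only [eval_add, eval_C]
      push_cast
      ring
    | succ n hn ihn =>
      have hk : n + 1 - (m + 1) = (n - (m + 1)) + 1 := by omega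
      have hk2 : n - (m + 1) + 1 = n - m := by omega
      rw [hk, Chat_rec, ihn, hk2, hqeval n (by omega)]
      have := hstep (n : ℚ)
      push_cast
      linarith

lemma poly_bound (r : Polynomial ℚ) (D : ℕ) (hD : r.natDegree ≤ D) :
    ∃ c : ℚ, 0 ≤ c ∧ ∀ x : ℚ, 1 ≤ x → |r.eval x| ≤ c * x ^ D := by
  refine ⟨∑ i ∈ Finset.range (r.natDegree + 1), |r.coeff i|, Finset.sum_nonneg (fun i _ => abs_nonneg _), ?_⟩
  intro x hx
  have hx0 : (0:ℚ) ≤ x := le_trans zero_le_one hx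
  rw [eval_eq_sum_range]
  apply (Finset.abs_sum_le_sum_abs _ _).trans
  rw [Finset.sum_mul]
  apply Finset.sum_le_sum
  intro i hi
  rw [abs_mul, abs_pow, abs_of_nonneg hx0]
  apply mul_le_mul_of_nonneg_left _ (abs_nonneg _)
  apply pow_le_pow_right₀ hx
  have := Finset.mem_range.mp hi
  omega


theorem stmt_7 (m : ℕ) :
    (∃ q : Polynomial ℚ, q.degree = m ∧
        q.leadingCoeff = 1 / (2 ^ m * m.factorial) ∧
        ∀ n : ℕ, m ≤ n → Chat n (n - m) = q.eval (n : ℚ)) ∧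
    (∃ c : ℚ, ∀ n : ℕ, m ≤ n →
        |Chat n (n - m) - (n.choose m : ℚ) / 2 ^ m| ≤ c * (n : ℚ) ^ (m - 1)) := by
  obtain ⟨q, hqdeg, hqlead, hqeval⟩ := poly_exists m
  refine ⟨⟨q, hqdeg, hqlead, hqeval⟩, ?_⟩
  set α : ℚ := 1 / (2 ^ m * m.factorial) with hα
  have hα0 : α ≠ 0 := by positivity
  set p : Polynomial ℚ := C α * descPochhammer ℚ m with hpdef
  have hmne : (descPochhammer ℚ m) ≠ 0 := (monic_descPochhammer ℚ m).ne_zero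
  have hpdeg : p.degree = (m : ℕ) := by
    rw [hpdef, degree_mul, degree_C hα0, degree_eq_natDegree hmne, descPochhammer_natDegree]
    simp
  have hplead : p.leadingCoeff = α := by
    rw [hpdef, leadingCoeff_mul, leadingCoeff_C, (monic_descPochhammer ℚ m).leadingCoeff, mul_one]
  have hpeval : ∀ n : ℕ, p.eval (n : ℚ) = (n.choose m : ℚ) / 2 ^ m := by
    intro n
    rw [hpdef, eval_mul, eval_C, descPochhammer_eval_eq_descFactorial,
      Nat.descFactorial_eq_factorial_mul_choose, hα]
    have h1 : ((m.factorial : ℚ)) ≠ 0 := by positivity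
    have h2 : (2:ℚ)^m ≠ 0 := by positivity
    push_cast
    field_simp
  set r : Polynomial ℚ := q - p with hrdef
  have hqne : q ≠ 0 := by
    intro h
    rw [h, degree_zero] at hqdeg
    exact (by simp : ((m:ℕ) : WithBot ℕ) ≠ ⊥) hqdeg.symm
  have hrdeg : r.degree < (m : ℕ) := by
    rw [hrdef]
    rw [← hqdeg]
    exact degree_sub_lt (hqdeg.trans hpdeg.symm) hqne (hqlead.trans hplead.symm)
  have hkey : ∀ n : ℕ, m ≤ n →
      Chat n (n - m) - (n.choose m : ℚ) / 2 ^ m = r.eval (n : ℚ) := by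
    intro n hn
    rw [hrdef, eval_sub, hpeval, hqeval n hn]
  rcases Nat.eq_zero_or_pos m with hm | hm
  · subst hm
    have hr0 : r = 0 := by
      by_contra h
      have := zero_le_degree_iff.mpr h
      rw [Nat.cast_zero] at hrdeg
      exact absurd (this.trans_lt hrdeg) (lt_irrefl _)
    refine ⟨0, fun n hn => ?_⟩
    rw [hkey n hn, hr0]
    simp
  · have hrnat : r.natDegree ≤ m - 1 := by
      rcases eq_or_ne r 0 with h | h
      · simp [h]
      · have := (natDegree_lt_iff_degree_lt h).mpr hrdeg
        omega
    obtain ⟨c, hc0, hc⟩ := poly_bound r (m - 1) hrnat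
    refine ⟨c, fun n hn => ?_⟩
    rw [hkey n hn]
    exact hc _ (by exact_mod_cast le_trans hm hn)
end

section
/- The sum over all 2^n binary strings s of length n of the total number of distinct subsequences of s (including the empty subsequence) equals 2·3^n − 2^n. Equivalently, the expected total number of distinct subsequences of a uniformly random binary string of length n is 2·(3/2)^n − 1. -/
/-- Total number of distinct subsequences of `s` (including the empty subsequence). -/
def countAll (s : List Bool) : ℕ := (s.sublists.dedup).length

lemma countAll_eq (s : List Bool) : countAll s = s.sublists.toFinset.card :=
  (List.card_toFinset _).symm

lemma toFinset_sublists_cons (b : Bool) (s : List Bool) :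
    (b :: s).sublists.toFinset
      = s.sublists.toFinset ∪ s.sublists.toFinset.image (b :: ·) := by
  ext t
  simp only [Finset.mem_union, Finset.mem_image, List.mem_toFinset, List.mem_sublists,
    List.sublist_cons_iff]
  constructor
  · rintro (h | ⟨r, rfl, hr⟩)
    · exact Or.inl h
    · exact Or.inr ⟨r, hr, rfl⟩
  · rintro (h | ⟨r, hr, rfl⟩)
    · exact Or.inl h
    · exact Or.inr ⟨r, rfl, hr⟩

lemma inter_eq (b : Bool) (s : List Bool) :
    s.sublists.toFinset ∩ s.sublists.toFinset.image (b :: ·)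
      = s.sublists.toFinset.filter (fun t => t.head? = some b) := by
  ext t
  simp only [Finset.mem_inter, Finset.mem_image, Finset.mem_filter, List.mem_toFinset,
    List.mem_sublists]
  constructor
  · rintro ⟨ht, r, hr, rfl⟩
    exact ⟨ht, rfl⟩
  · rintro ⟨ht, hh⟩
    cases t with
    | nil => simp at hh
    | cons a r =>
      simp only [List.head?_cons, Option.some.injEq] at hh
      exact ⟨ht, r, (List.sublist_cons_self a r).trans ht, by rw [hh]⟩

lemma sum_cons (s : List Bool) :
    ∑ b : Bool, countAll (b :: s) = 3 * countAll s + 1 := by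
  have key : ∀ b : Bool, countAll (b :: s) + (s.sublists.toFinset.filter
      (fun t => t.head? = some b)).card = 2 * countAll s := by
    intro b
    rw [countAll_eq, toFinset_sublists_cons, ← inter_eq, Finset.card_union_add_card_inter,
      Finset.card_image_of_injective _ (fun x y h => by injection h), countAll_eq]
    ring
  have hsplit : (s.sublists.toFinset.filter (fun t => t.head? = some false)).card
      + (s.sublists.toFinset.filter (fun t => t.head? = some true)).card
      + 1 = countAll s := by
    rw [countAll_eq]
    have h1 : (s.sublists.toFinset.filter (fun t => t.head? = some false)).card
        + (s.sublists.toFinset.filter (fun t => ¬ t.head? = some false)).card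
        = s.sublists.toFinset.card := Finset.card_filter_add_card_filter_not _
    have h2 : s.sublists.toFinset.filter (fun t => ¬ t.head? = some false)
        = insert [] (s.sublists.toFinset.filter (fun t => t.head? = some true)) := by
      ext t
      simp only [Finset.mem_filter, Finset.mem_insert, List.mem_toFinset, List.mem_sublists]
      cases t with
      | nil => simp [List.nil_sublist]
      | cons a r => cases a <;> simp
    have h3 : [] ∉ s.sublists.toFinset.filter (fun t => t.head? = some true) := by simp
    rw [h2, Finset.card_insert_of_notMem h3] at h1
    omega
  have kf := key false
  have kt := key true
  rw [Fintype.sum_bool]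
  omega

lemma sum_key (n : ℕ) :
    (∑ f : Fin n → Bool, countAll (List.ofFn f)) + 2 ^ n = 2 * 3 ^ n := by
  induction n with
  | zero => decide
  | succ n ih =>
    have e : (∑ f : Fin (n+1) → Bool, countAll (List.ofFn f))
        = ∑ p : Bool × (Fin n → Bool), countAll (p.1 :: List.ofFn p.2) := by
      rw [← Fintype.sum_equiv (Fin.consEquiv (fun _ : Fin (n+1) => Bool))
        (fun p : Bool × (Fin n → Bool) => countAll (p.1 :: List.ofFn p.2))
        (fun f : Fin (n+1) → Bool => countAll (List.ofFn f)) ?_]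
      intro p
      rw [List.ofFn_succ]
      simp [Fin.consEquiv]
    have e2 : (∑ p : Bool × (Fin n → Bool), countAll (p.1 :: List.ofFn p.2))
        = ∑ g : Fin n → Bool, ∑ b : Bool, countAll (b :: List.ofFn g) := by
      rw [Fintype.sum_prod_type_right]
    have e3 : (∑ g : Fin n → Bool, ∑ b : Bool, countAll (b :: List.ofFn g))
        = 3 * (∑ f : Fin n → Bool, countAll (List.ofFn f)) + 2 ^ n := by
      calc (∑ g : Fin n → Bool, ∑ b : Bool, countAll (b :: List.ofFn g))
          = ∑ g : Fin n → Bool, (3 * countAll (List.ofFn g) + 1) := by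
            exact Finset.sum_congr rfl fun g _ => sum_cons _
        _ = 3 * (∑ f : Fin n → Bool, countAll (List.ofFn f)) + 2 ^ n := by
            rw [Finset.sum_add_distrib, ← Finset.mul_sum, Finset.sum_const, Finset.card_univ]
            simp [Fintype.card_fun]
    rw [e, e2, e3, pow_succ, pow_succ]
    omega

theorem stmt_11 (n : ℕ) :
    (∑ f : Fin n → Bool, countAll (List.ofFn f)) = 2 * 3 ^ n - 2 ^ n ∧
    (∑ f : Fin n → Bool, (countAll (List.ofFn f) : ℚ)) / 2 ^ n
      = 2 * (3 / 2 : ℚ) ^ n - 1 := by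
  have h := sum_key n
  constructor
  · omega
  · have hc : (∑ f : Fin n → Bool, (countAll (List.ofFn f) : ℚ))
        = ((∑ f : Fin n → Bool, countAll (List.ofFn f) : ℕ) : ℚ) := by
      push_cast; ring
    have h' : (∑ f : Fin n → Bool, (countAll (List.ofFn f) : ℚ)) + 2 ^ n
        = 2 * 3 ^ n := by
      rw [hc]
      exact_mod_cast congrArg (Nat.cast : ℕ → ℚ) h
    have h2 : ((2 : ℚ)) ^ n ≠ 0 := by positivity
    field_simp [div_pow] at *
    linarith [h', show (2:ℚ)^n * (3/2)^n = 3^n by rw [← mul_pow]; norm_num]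
end
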